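/- A continuous map f : 𝖱 → 𝖫 from the closed long ray to the long line cannot be unbounded in both halves of 𝖫: at least one of f(𝖱) ∩ 𝖫^+ and f(𝖱) ∩ 𝖫^- is a bounded subset of the corresponding copy of 𝖱. -/

import Mathlib

noncomputable section
open Set

/-- The first uncountable ordinal `ω₁`. -/
def Omega1 : Ordinal := Ordinal.omega 1

/-- The closed long ray `𝖱`: `ω₁ × [0,1)` with the lexicographic order. -/
def LongRay : Type 1 := {o : Ordinal // o < Omega1} ×ₗ (Set.Ico (0:ℝ) 1)

instance : LinearOrder LongRay :=
  inferInstanceAs (LinearOrder ({o : Ordinal // o < Omega1} ×ₗ (Set.Ico (0:ℝ) 1)))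

/-- `𝖱` carries the order topology. -/
instance : TopologicalSpace LongRay := Preorder.topology LongRay
instance : OrderTopology LongRay := ⟨rfl⟩

lemma omega1_pos : (0 : Ordinal) < Omega1 := Ordinal.omega_pos 1

/-- The point `0 = (0,0)` of the long ray. -/
def rayZero : LongRay := toLex (⟨0, omega1_pos⟩, ⟨0, by simp⟩)

/-- Identification of the countable ordinal `o` with the point `(o,0)` of the long ray
(junk value for `o ≥ ω₁`). -/
def ordR (o : Ordinal) : LongRay :=
  if h : o < Omega1 then toLex (⟨o, h⟩, ⟨0, by simp⟩) else rayZero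

/-- The `I`-diagonal at height `c` (only the values of `c` off `I` are relevant). -/
def Delta (n : ℕ) (I : Finset (Fin n)) (c : Fin n → LongRay) : Set (Fin n → LongRay) :=
  {x | (∀ i ∈ I, ∀ i' ∈ I, x i = x i') ∧ ∀ j ∉ I, x j = c j}

/-- `f` is `I`-cofinal if `f` restricted to `Δ_I = Δ_I(0)` is unbounded. -/
def ICofinal (n : ℕ) (f : (Fin n → LongRay) → LongRay) (I : Finset (Fin n)) : Prop :=
  ¬ BddAbove (f '' Delta n I (fun _ => rayZero))

/-- The cofinality class `𝔠(f) = {I : f is I-cofinal}`. -/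
def cofClass (n : ℕ) (f : (Fin n → LongRay) → LongRay) : Set (Finset (Fin n)) :=
  {I | ICofinal n f I}

/-- `M_I(c) = {x : x_i ≥ c for all i ∈ I}`. -/
def MSet (n : ℕ) (I : Finset (Fin n)) (c : LongRay) : Set (Fin n → LongRay) :=
  {x | ∀ i ∈ I, c ≤ x i}

/-- `E_I(b,d) = {x ∈ M_I(d) : x_j = b_j for all j ∉ I}`. -/
def ESet (n : ℕ) (I : Finset (Fin n)) (b : Fin n → LongRay) (d : LongRay) :
    Set (Fin n → LongRay) :=
  {x | (∀ i ∈ I, d ≤ x i) ∧ ∀ j ∉ I, x j = b j}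

/-- The long line `𝖫`: two copies of the long ray glued at `0` (a reversed copy
followed by a direct copy, with the two zeros identified), with the order topology. -/
def LongLine : Type 1 :=
  {x : LongRayᵒᵈ ⊕ₗ LongRay // x ≠ toLex (Sum.inl (OrderDual.toDual rayZero))}

instance : LinearOrder LongLine :=
  inferInstanceAs (LinearOrder
    {x : LongRayᵒᵈ ⊕ₗ LongRay // x ≠ toLex (Sum.inl (OrderDual.toDual rayZero))})

instance : TopologicalSpace LongLine := Preorder.topology LongLine
instance : OrderTopology LongLine := ⟨rfl⟩

/-- The glueing point `0` of the long line. -/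
def longZero : LongLine :=
  ⟨toLex (Sum.inr rayZero), by simp⟩

namespace LongProof

open Filter Topology

/-- first coordinate, as an ordinal -/
def pi1 (x : LongRay) : Ordinal := ((ofLex x).1 : Ordinal)
/-- second coordinate, as a real -/
def pi2 (x : LongRay) : ℝ := ((ofLex x).2 : ℝ)

lemma pi1_lt (x : LongRay) : pi1 x < Omega1 := (ofLex x).1.2
lemma pi2_mem (x : LongRay) : pi2 x ∈ Set.Ico (0:ℝ) 1 := (ofLex x).2.2

lemma ray_le_iff {x y : LongRay} :
    x ≤ y ↔ pi1 x < pi1 y ∨ (pi1 x = pi1 y ∧ pi2 x ≤ pi2 y) := by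
  constructor
  · intro h
    rcases (Prod.Lex.le_iff (x := x) (y := y)).1 h with h1 | ⟨h1, h2⟩
    · exact Or.inl h1
    · exact Or.inr ⟨congrArg Subtype.val h1, h2⟩
  · intro h
    refine (Prod.Lex.le_iff (x := x) (y := y)).2 ?_
    rcases h with h1 | ⟨h1, h2⟩
    · exact Or.inl h1
    · exact Or.inr ⟨Subtype.ext h1, h2⟩

lemma ray_lt_iff {x y : LongRay} :
    x < y ↔ pi1 x < pi1 y ∨ (pi1 x = pi1 y ∧ pi2 x < pi2 y) := by
  constructor
  · intro h
    rcases (Prod.Lex.lt_iff (x := x) (y := y)).1 h with h1 | ⟨h1, h2⟩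
    · exact Or.inl h1
    · exact Or.inr ⟨congrArg Subtype.val h1, h2⟩
  · intro h
    refine (Prod.Lex.lt_iff (x := x) (y := y)).2 ?_
    rcases h with h1 | ⟨h1, h2⟩
    · exact Or.inl h1
    · exact Or.inr ⟨Subtype.ext h1, h2⟩

lemma pi1_mono {x y : LongRay} (h : x ≤ y) : pi1 x ≤ pi1 y := by
  rcases ray_le_iff.1 h with h1 | ⟨h1, _⟩
  · exact h1.le
  · exact h1.le

lemma rayZero_le (x : LongRay) : rayZero ≤ x := by
  have h0 : pi1 rayZero = 0 := rfl
  rcases (show (0:Ordinal) ≤ pi1 x from zero_le).lt_or_eq with h | h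
  · exact ray_le_iff.2 (Or.inl (h0 ▸ h))
  · exact ray_le_iff.2 (Or.inr ⟨h0 ▸ h, (pi2_mem x).1⟩)

def supOrd (S : Set LongRay) : Ordinal := sSup (pi1 '' S)

lemma bddAbove_pi1_image {S : Set LongRay} (hB : BddAbove S) : BddAbove (pi1 '' S) := by
  obtain ⟨b, hb⟩ := hB
  exact ⟨pi1 b, by rintro a ⟨x, hx, rfl⟩; exact pi1_mono (hb hx)⟩

lemma supOrd_lt {S : Set LongRay} (hS : S.Nonempty) (hB : BddAbove S) : supOrd S < Omega1 := by
  obtain ⟨b, hb⟩ := hB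
  refine lt_of_le_of_lt (csSup_le (hS.image pi1) ?_) (pi1_lt b)
  rintro a ⟨x, hx, rfl⟩
  exact pi1_mono (hb hx)

lemma le_supOrd {S : Set LongRay} {x : LongRay} (hB : BddAbove S) (hx : x ∈ S) :
    pi1 x ≤ supOrd S := le_csSup (bddAbove_pi1_image hB) ⟨x, hx, rfl⟩

def topSlice (S : Set LongRay) : Set ℝ := {r | ∃ x ∈ S, pi1 x = supOrd S ∧ pi2 x = r}

lemma topSlice_bdd (S : Set LongRay) : BddAbove (topSlice S) := by
  refine ⟨1, ?_⟩
  rintro r ⟨x, hx, h1, rfl⟩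
  exact (pi2_mem x).2.le

lemma sSup_topSlice_nonneg {S : Set LongRay} (hT : (topSlice S).Nonempty) :
    0 ≤ sSup (topSlice S) := by
  obtain ⟨r, hr⟩ := hT
  obtain ⟨x, hx, h1, h2⟩ := hr
  calc (0:ℝ) ≤ r := h2 ▸ (pi2_mem x).1
  _ ≤ sSup (topSlice S) := le_csSup (topSlice_bdd S) ⟨x, hx, h1, h2⟩

lemma supOrd_lt_of_ub {S : Set LongRay} {c : LongRay} (hub : c ∈ upperBounds S)
    (hT : (topSlice S).Nonempty) (ht : ¬ sSup (topSlice S) < 1) : supOrd S < pi1 c := by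
  obtain ⟨r0, x0, hx0, _, _⟩ := hT
  have hS : S.Nonempty := ⟨x0, hx0⟩
  have hle : supOrd S ≤ pi1 c := by
    refine csSup_le (hS.image pi1) ?_
    rintro a ⟨x, hx, rfl⟩
    exact pi1_mono (hub hx)
  rcases hle.lt_or_eq with h | h
  · exact h
  · exfalso
    have hsup : sSup (topSlice S) ≤ pi2 c := by
      refine csSup_le ⟨r0, x0, hx0, ‹_›, ‹_›⟩ ?_
      rintro r ⟨x, hx, h1, rfl⟩
      rcases ray_le_iff.1 (hub hx) with hlt | ⟨_, hle2⟩
      · rw [h1, h] at hlt; exact absurd hlt (lt_irrefl _)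
      · exact hle2
    exact ht (lt_of_le_of_lt hsup (pi2_mem c).2)

lemma supOrd_succ_lt {S : Set LongRay} (hB : BddAbove S)
    (hT : (topSlice S).Nonempty) (ht : ¬ sSup (topSlice S) < 1) : supOrd S + 1 < Omega1 := by
  obtain ⟨b, hb⟩ := hB
  have h := supOrd_lt_of_ub hb hT ht
  have h1 : supOrd S + 1 ≤ pi1 b := by
    rw [Ordinal.add_one_eq_succ]
    exact Order.succ_le_of_lt h
  exact lt_of_le_of_lt h1 (pi1_lt b)

open Classical in
noncomputable def raySup (S : Set LongRay) (hS : S.Nonempty) (hB : BddAbove S) : LongRay :=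
  if hT : (topSlice S).Nonempty then
    if ht : sSup (topSlice S) < 1 then
      toLex (⟨supOrd S, supOrd_lt hS hB⟩, ⟨sSup (topSlice S), sSup_topSlice_nonneg hT, ht⟩)
    else
      toLex (⟨supOrd S + 1, supOrd_succ_lt hB hT ht⟩, ⟨0, by simp⟩)
  else toLex (⟨supOrd S, supOrd_lt hS hB⟩, ⟨0, by simp⟩)

lemma supOrd_le_ub {S : Set LongRay} (hS : S.Nonempty) {c : LongRay}
    (hc : c ∈ upperBounds S) : supOrd S ≤ pi1 c := by
  refine csSup_le (hS.image pi1) ?_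
  rintro a ⟨x, hx, rfl⟩
  exact pi1_mono (hc hx)

lemma isLUB_raySup (S : Set LongRay) (hS : S.Nonempty) (hB : BddAbove S) :
    IsLUB S (raySup S hS hB) := by
  by_cases hT : (topSlice S).Nonempty <;>
    [(by_cases ht : sSup (topSlice S) < 1 <;> simp only [raySup, hT, ht, ↓reduceDIte]);
     simp only [raySup, hT, ↓reduceDIte]]
  · constructor
    · intro x hx
      rcases (le_supOrd hB hx).lt_or_eq with h | h
      · exact ray_le_iff.2 (Or.inl h)
      · exact ray_le_iff.2 (Or.inr ⟨h, le_csSup (topSlice_bdd S) ⟨x, hx, h, rfl⟩⟩)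
    · intro c hc
      rcases (supOrd_le_ub hS hc).lt_or_eq with h | h
      · exact ray_le_iff.2 (Or.inl h)
      · refine ray_le_iff.2 (Or.inr ⟨h, csSup_le hT ?_⟩)
        rintro r ⟨x, hx, hx1, rfl⟩
        rcases ray_le_iff.1 (hc hx) with hlt | ⟨_, hle⟩
        · rw [hx1, h] at hlt; exact absurd hlt (lt_irrefl _)
        · exact hle
  · constructor
    · intro x hx
      refine ray_le_iff.2 (Or.inl (lt_of_le_of_lt (le_supOrd hB hx) ?_))
      show supOrd S < supOrd S + 1
      rw [Ordinal.add_one_eq_succ]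
      exact Order.lt_succ_of_not_isMax (not_isMax _)
    · intro c hc
      have h := supOrd_lt_of_ub hc hT ht
      have h1 : supOrd S + 1 ≤ pi1 c := by
        rw [Ordinal.add_one_eq_succ]; exact Order.succ_le_of_lt h
      rcases h1.lt_or_eq with h2 | h2
      · exact ray_le_iff.2 (Or.inl h2)
      · exact ray_le_iff.2 (Or.inr ⟨h2, (pi2_mem c).1⟩)
  · constructor
    · intro x hx
      rcases (le_supOrd hB hx).lt_or_eq with h | h
      · exact ray_le_iff.2 (Or.inl h)
      · exact absurd ⟨x, hx, h, rfl⟩ (fun hmem => hT ⟨pi2 x, hmem⟩)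
    · intro c hc
      rcases (supOrd_le_ub hS hc).lt_or_eq with h | h
      · exact ray_le_iff.2 (Or.inl h)
      · exact ray_le_iff.2 (Or.inr ⟨h, (pi2_mem c).1⟩)

end LongProof
namespace LongProof

lemma ray_noMax (x : LongRay) : ∃ y : LongRay, x < y := by
  have h1 : pi1 x + 1 < Omega1 := by
    rw [Ordinal.add_one_eq_succ]
    exact (Cardinal.isSuccLimit_omega 1).succ_lt (pi1_lt x)
  refine ⟨toLex (⟨pi1 x + 1, h1⟩, ⟨0, by simp⟩), ?_⟩
  refine ray_lt_iff.2 (Or.inl ?_)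
  show pi1 x < pi1 x + 1
  rw [Ordinal.add_one_eq_succ]
  exact Order.lt_succ_of_not_isMax (not_isMax _)

lemma not_bddAbove_univ_ray : ¬ BddAbove (Set.univ : Set LongRay) := by
  rintro ⟨b, hb⟩
  obtain ⟨y, hy⟩ := ray_noMax b
  exact absurd (hb (Set.mem_univ y)) (not_le.2 hy)

open Classical in
noncomputable instance : SupSet LongRay :=
  ⟨fun S => if h : S.Nonempty ∧ BddAbove S then raySup S h.1 h.2 else rayZero⟩

lemma ray_isLUB_sSup (S : Set LongRay) (hB : BddAbove S) (hS : S.Nonempty) :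
    IsLUB S (sSup S) := by
  have : sSup S = raySup S hS hB := dif_pos ⟨hS, hB⟩
  rw [this]
  exact isLUB_raySup S hS hB

lemma ray_sSup_junk {S : Set LongRay} (h : ¬ (S.Nonempty ∧ BddAbove S)) : sSup S = rayZero :=
  dif_neg h

noncomputable instance : ConditionallyCompleteLinearOrder LongRay :=
  { conditionallyCompleteLatticeOfLatticeOfsSup LongRay ray_isLUB_sSup,
    (inferInstance : LinearOrder LongRay) with
    csSup_of_not_bddAbove := fun s hs => by
      rw [ray_sSup_junk (fun h => hs h.2), ray_sSup_junk (by simp)]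
    csInf_of_not_bddBelow := fun s hs => by
      show sSup (lowerBounds s) = sSup (lowerBounds (∅ : Set LongRay))
      have h1 : sSup (∅ : Set LongRay) = rayZero := ray_sSup_junk (by simp)
      have h2 : sSup (lowerBounds (∅ : Set LongRay)) = rayZero := by
        refine ray_sSup_junk ?_
        rw [lowerBounds_empty]
        rintro ⟨-, h⟩
        exact not_bddAbove_univ_ray h
      rw [Set.not_nonempty_iff_eq_empty.1 hs, h1, h2] }

example (a b : LongRay) : IsCompact (Set.Icc a b) := isCompact_Icc

end LongProof
namespace LongProof

instance : Nonempty LongLine := ⟨longZero⟩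

def half : LongRay := toLex (⟨0, omega1_pos⟩, ⟨1/2, by norm_num⟩)

lemma rayZero_lt_half : rayZero < half := by
  refine ray_lt_iff.2 (Or.inr ⟨rfl, ?_⟩)
  show (0:ℝ) < 1/2
  norm_num

def pPos : LongLine := ⟨toLex (Sum.inr half), by simp⟩

def qNeg : LongLine :=
  ⟨toLex (Sum.inl (OrderDual.toDual half)), by
    simp only [ne_eq, EmbeddingLike.apply_eq_iff_eq, Sum.inl.injEq]
    intro h
    have h2 := congrArg pi2 (OrderDual.toDual.injective h)
    have : (1/2 : ℝ) = 0 := h2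
    norm_num at this⟩

lemma qNeg_lt_pPos : qNeg < pPos :=
  Subtype.mk_lt_mk.2 (Sum.Lex.inl_lt_inr _ _)

lemma bddAbove_pos_of_preimage (f : LongRay → LongLine) (hf : Continuous f)
    (h : BddAbove (f ⁻¹' (Set.Ici pPos))) :
    BddAbove {y | y ∈ Set.range f ∧ longZero ≤ y} := by
  obtain ⟨z, hz⟩ := h
  have hK : IsCompact (f '' Set.Icc rayZero z) := isCompact_Icc.image hf
  obtain ⟨c, hc⟩ := hK.bddAbove
  refine ⟨c ⊔ pPos, ?_⟩
  rintro y ⟨⟨x, rfl⟩, -⟩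
  by_cases hp : pPos ≤ f x
  · exact le_sup_of_le_left (hc ⟨x, ⟨rayZero_le x, hz hp⟩, rfl⟩)
  · exact le_sup_of_le_right (not_le.1 hp).le

lemma bddBelow_neg_of_preimage (f : LongRay → LongLine) (hf : Continuous f)
    (h : BddAbove (f ⁻¹' (Set.Iic qNeg))) :
    BddBelow {y | y ∈ Set.range f ∧ y ≤ longZero} := by
  obtain ⟨z, hz⟩ := h
  have hK : IsCompact (f '' Set.Icc rayZero z) := isCompact_Icc.image hf
  obtain ⟨c, hc⟩ := hK.bddBelow
  refine ⟨c ⊓ qNeg, ?_⟩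
  rintro y ⟨⟨x, rfl⟩, -⟩
  by_cases hq : f x ≤ qNeg
  · exact inf_le_of_left_le (hc ⟨x, ⟨rayZero_le x, hz hq⟩, rfl⟩)
  · exact inf_le_of_right_le (not_le.1 hq).le

lemma bddAbove_range_ray (u : ℕ → LongRay) : BddAbove (Set.range u) := by
  have h : ∀ n, pi1 (u n) < (Cardinal.aleph 1).ord := by
    intro n
    have := pi1_lt (u n)
    rwa [show Omega1 = (Cardinal.aleph 1).ord from (Cardinal.ord_aleph 1).symm] at this
  have hsup : iSup (fun n => pi1 (u n)) < Omega1 := by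
    have h2 := Ordinal.iSup_lt_omega_one (f := fun n => pi1 (u n))
      (fun n => by rw [← Cardinal.ord_aleph]; exact h n)
    exact h2
  have hβ1 : iSup (fun n => pi1 (u n)) + 1 < Omega1 := by
    rw [Ordinal.add_one_eq_succ]
    exact (Cardinal.isSuccLimit_omega 1).succ_lt hsup
  refine ⟨toLex (⟨iSup (fun n => pi1 (u n)) + 1, hβ1⟩, ⟨0, by simp⟩), ?_⟩
  rintro x ⟨n, rfl⟩
  refine ray_le_iff.2 (Or.inl ?_)
  show pi1 (u n) < iSup (fun n => pi1 (u n)) + 1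
  refine lt_of_le_of_lt (Ordinal.le_iSup (fun n => pi1 (u n)) n) ?_
  rw [Ordinal.add_one_eq_succ]
  exact Order.lt_succ_of_not_isMax (not_isMax _)

open Filter Topology in
lemma main_contradiction (f : LongRay → LongLine) (hf : Continuous f)
    (hA : ¬ BddAbove (f ⁻¹' (Set.Ici pPos))) (hB : ¬ BddAbove (f ⁻¹' (Set.Iic qNeg))) :
    False := by
  choose gA hgA hgA' using not_bddAbove_iff.1 hA
  choose gB hgB hgB' using not_bddAbove_iff.1 hB
  set u : ℕ → LongRay :=
    fun n => Nat.rec (gA rayZero) (fun n x => if Even n then gB x else gA x) n with hu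
  have hsucc : ∀ n, u (n + 1) = if Even n then gB (u n) else gA (u n) := fun n => rfl
  have hmono : StrictMono u := by
    refine strictMono_nat_of_lt_succ (fun n => ?_)
    rw [hsucc]
    split_ifs
    · exact hgB' _
    · exact hgA' _
  have hmem : ∀ n, (Even n → u n ∈ f ⁻¹' (Set.Ici pPos)) ∧
      (¬ Even n → u n ∈ f ⁻¹' (Set.Iic qNeg)) := by
    intro n
    induction n with
    | zero => exact ⟨fun _ => hgA rayZero, fun h => absurd Even.zero h⟩
    | succ n ih =>
      rcases Nat.even_or_odd n with h | h
      · have hno : ¬ Even (n + 1) := by simp [Nat.even_add_one, h]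
        refine ⟨fun h' => absurd h' hno, fun _ => ?_⟩
        rw [hsucc n, if_pos h]
        exact hgB _
      · have h' : ¬ Even n := Nat.not_even_iff_odd.2 h
        refine ⟨fun _ => ?_, fun hc => absurd (Nat.even_add_one.2 h') hc⟩
        rw [hsucc n, if_neg h']
        exact hgA _
  have hlub := isLUB_raySup (Set.range u) (Set.range_nonempty u) (bddAbove_range_ray u)
  have htend : Tendsto u atTop (𝓝 (raySup (Set.range u) (Set.range_nonempty u)
      (bddAbove_range_ray u))) := tendsto_atTop_isLUB hmono.monotone hlub
  set s := raySup (Set.range u) (Set.range_nonempty u) (bddAbove_range_ray u) with hs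
  have h2n : Tendsto (fun n => 2 * n) atTop atTop :=
    tendsto_atTop_atTop_of_monotone (fun a b h => by omega) (fun b => ⟨b, by omega⟩)
  have h2n1 : Tendsto (fun n => 2 * n + 1) atTop atTop :=
    tendsto_atTop_atTop_of_monotone (fun a b h => by omega) (fun b => ⟨b, by omega⟩)
  have hsA : s ∈ f ⁻¹' (Set.Ici pPos) := by
    refine (IsClosed.preimage hf isClosed_Ici).mem_of_tendsto (htend.comp h2n)
      (Eventually.of_forall (fun n => ?_))
    exact (hmem (2 * n)).1 (even_two_mul n)
  have hsB : s ∈ f ⁻¹' (Set.Iic qNeg) := by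
    refine (IsClosed.preimage hf isClosed_Iic).mem_of_tendsto (htend.comp h2n1)
      (Eventually.of_forall (fun n => ?_))
    refine (hmem (2 * n + 1)).2 ?_
    simp [Nat.even_add_one]
  exact absurd (le_trans hsA hsB) (not_le.2 qNeg_lt_pPos)

end LongProof

/-- a continuous `f : 𝖱 → 𝖫` cannot be unbounded in both halves of `𝖫`:
its image is bounded in `𝖫⁺ = [0,∞)` or bounded in `𝖫⁻ = (-∞,0]` (in the reversed
order of the negative copy, i.e. bounded below). -/
theorem not_unbounded_both_sides (f : LongRay → LongLine) (hf : Continuous f) :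
    BddAbove {y | y ∈ Set.range f ∧ longZero ≤ y} ∨
    BddBelow {y | y ∈ Set.range f ∧ y ≤ longZero} := by
  by_contra hcon
  push_neg at hcon
  exact LongProof.main_contradiction f hf
    (fun h => hcon.1 (LongProof.bddAbove_pos_of_preimage f hf h))
    (fun h => hcon.2 (LongProof.bddBelow_neg_of_preimage f hf h))
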